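/- Let 0 = x₀ < x₁ < ⋯ < x_J with h_j = x_j - x_{j-1} and h_{j+1/2} = (h_j + h_{j+1})/2, and let θ ≤ 1/4. For a function W on the mesh with W₀ = 0, define ‖W‖²_{C_θ[ρ]} = Σ_{j=1}^{J-1} (C_θ[ρ]W)_j W_j h_{j+1/2} + ρ_J (θW_{J-1} + (1/2-θ)W_J) W_J h_J, where (C_θ[ρ]W)_j = θ(h_j/h_{j+1/2})ρ_j W_{j-1} + (1-2θ)(ŝ_xρ)_j W_j + θ(h_{j+1}/h_{j+1/2})ρ_{j+1}W_{j+1} and (ŝ_xρ)_j = (h_jρ_j + h_{j+1}ρ_{j+1})/(2h_{j+1/2}). If 0 < ρ̱ ≤ ρ_j ≤ ρ̄ for all j, then √(c_θ ρ̱)·‖W‖ ≤ ‖W‖_{C_θ[ρ]} ≤ √((1 + 4max{-θ,0})ρ̄)·‖W‖, where c_θ = 1 - 4max{θ,0} and ‖W‖² = Σ_{j=1}^{J-1} W_j² h_{j+1/2} + W_J² h_J/2. -/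

import Mathlib

lemma keylem (θ a b p q u v w : ℝ) (hab : 0 < a + b) :
    (θ * (a / ((a+b)/2)) * p * u
      + (1 - 2*θ) * ((a*p + b*q) / (2*((a+b)/2))) * v
      + θ * (b / ((a+b)/2)) * q * w) * v * ((a+b)/2)
    + q * (θ * v + (1/2 - θ) * w) * w * b
    = p * (θ * u + (1/2 - θ) * v) * v * a
      + b * q * (2*θ*v*w + (1-2*θ)*((v^2 + w^2)/2)) := by
  have h : a + b ≠ 0 := ne_of_gt hab
  field_simp
  ring

lemma qbounds (θ a b : ℝ) :
    (1 - 4*max θ 0) * ((a^2+b^2)/2) ≤ 2*θ*a*b + (1-2*θ)*((a^2+b^2)/2) ∧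
    2*θ*a*b + (1-2*θ)*((a^2+b^2)/2) ≤ (1 + 4*max (-θ) 0) * ((a^2+b^2)/2) := by
  rcases le_total θ 0 with h | h
  · rw [max_eq_right h, max_eq_left (by linarith : (0:ℝ) ≤ -θ)]
    refine ⟨by nlinarith [mul_nonneg (neg_nonneg.2 h) (sq_nonneg (a-b))],
      by nlinarith [mul_nonneg (neg_nonneg.2 h) (sq_nonneg (a+b))]⟩
  · rw [max_eq_left h, max_eq_right (by linarith : -θ ≤ 0)]
    refine ⟨by nlinarith [mul_nonneg h (sq_nonneg (a+b))],
      by nlinarith [mul_nonneg h (sq_nonneg (a-b))]⟩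

lemma normId (x W : ℕ → ℝ) (hW0 : W 0 = 0) :
    ∀ J, 1 ≤ J →
    ((∑ j ∈ Finset.Ico 1 J,
        (W j)^2 * ((x j - x (j-1)) + (x (j+1) - x j))/2)
       + (W J)^2 * (x J - x (J-1))/2
     = ∑ j ∈ Finset.Ico 1 (J+1),
         (x j - x (j-1)) * (((W (j-1))^2 + (W j)^2)/2)) := by
  intro J hJ
  induction J, hJ using Nat.le_induction with
  | base =>
      rw [Finset.Ico_self, Finset.sum_empty,
          Finset.sum_Ico_succ_top le_rfl, Finset.Ico_self, Finset.sum_empty]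
      simp [hW0]; ring
  | succ n hn ih =>
      rw [Finset.sum_Ico_succ_top (by omega : 1 ≤ n),
          Finset.sum_Ico_succ_top (by omega : 1 ≤ n+1)]
      simp only [Nat.add_sub_cancel]
      rw [← ih]
      ring

lemma SId (x ρ W : ℕ → ℝ) (θ : ℝ) (hW0 : W 0 = 0) :
    ∀ J, 1 ≤ J → (∀ j, 1 ≤ j → j ≤ J → x (j-1) < x j) →
    ((∑ j ∈ Finset.Ico 1 J,
        (θ * ((x j - x (j-1)) / (((x j - x (j-1)) + (x (j+1) - x j))/2)) * ρ j * W (j-1)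
         + (1 - 2*θ) *
             (((x j - x (j-1)) * ρ j + (x (j+1) - x j) * ρ (j+1)) /
               (2 * (((x j - x (j-1)) + (x (j+1) - x j))/2))) * W j
         + θ * ((x (j+1) - x j) / (((x j - x (j-1)) + (x (j+1) - x j))/2)) * ρ (j+1)
             * W (j+1))
        * W j * (((x j - x (j-1)) + (x (j+1) - x j))/2))
      + ρ J * (θ * W (J-1) + (1/2 - θ) * W J) * W J * (x J - x (J-1))
     = ∑ j ∈ Finset.Ico 1 (J+1),
         (x j - x (j-1)) * ρ j *
           (2*θ*W (j-1)*W j + (1-2*θ)*(((W (j-1))^2 + (W j)^2)/2))) := by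
  intro J hJ
  induction J, hJ using Nat.le_induction with
  | base =>
      intro _
      rw [Finset.Ico_self, Finset.sum_empty,
          Finset.sum_Ico_succ_top le_rfl, Finset.Ico_self, Finset.sum_empty]
      simp [hW0]; ring
  | succ n hn ih =>
      intro hpos
      have ih' := ih (fun j h1 h2 => hpos j h1 (by omega))
      have h1 : 0 < x n - x (n-1) := sub_pos.2 (hpos n hn (by omega))
      have h2 : 0 < x (n+1) - x n := by
        have := hpos (n+1) (by omega) le_rfl
        simpa using sub_pos.2 this
      have key := keylem θ (x n - x (n-1)) (x (n+1) - x n) (ρ n) (ρ (n+1))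
        (W (n-1)) (W n) (W (n+1)) (by linarith)
      rw [Finset.sum_Ico_succ_top (by omega : 1 ≤ n),
          Finset.sum_Ico_succ_top (by omega : 1 ≤ n+1)]
      simp only [Nat.add_sub_cancel]
      linear_combination ih' + key

theorem stmt_15 (J : ℕ) (hJ : 1 ≤ J) (θ : ℝ) (hθ : θ ≤ 1/4)
    (x ρ W : ℕ → ℝ) (hx0 : x 0 = 0) (hxmono : ∀ j, j < J → x j < x (j+1))
    (hW0 : W 0 = 0) (ρlo ρhi : ℝ) (hρlo : 0 < ρlo)
    (hρ : ∀ j, 1 ≤ j → j ≤ J → ρlo ≤ ρ j ∧ ρ j ≤ ρhi) :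
    Real.sqrt ((1 - 4*max θ 0) * ρlo) *
      Real.sqrt (∑ j ∈ Finset.Ico 1 J,
          (W j)^2 * ((x j - x (j-1)) + (x (j+1) - x j))/2
        + (W J)^2 * (x J - x (J-1))/2)
      ≤ Real.sqrt (∑ j ∈ Finset.Ico 1 J,
            (θ * ((x j - x (j-1)) / (((x j - x (j-1)) + (x (j+1) - x j))/2)) * ρ j * W (j-1)
             + (1 - 2*θ) *
                 (((x j - x (j-1)) * ρ j + (x (j+1) - x j) * ρ (j+1)) /
                   (2 * (((x j - x (j-1)) + (x (j+1) - x j))/2))) * W j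
             + θ * ((x (j+1) - x j) / (((x j - x (j-1)) + (x (j+1) - x j))/2)) * ρ (j+1)
                 * W (j+1))
            * W j * (((x j - x (j-1)) + (x (j+1) - x j))/2)
          + ρ J * (θ * W (J-1) + (1/2 - θ) * W J) * W J * (x J - x (J-1)))
    ∧ Real.sqrt (∑ j ∈ Finset.Ico 1 J,
            (θ * ((x j - x (j-1)) / (((x j - x (j-1)) + (x (j+1) - x j))/2)) * ρ j * W (j-1)
             + (1 - 2*θ) *
                 (((x j - x (j-1)) * ρ j + (x (j+1) - x j) * ρ (j+1)) /
                   (2 * (((x j - x (j-1)) + (x (j+1) - x j))/2))) * W j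
             + θ * ((x (j+1) - x j) / (((x j - x (j-1)) + (x (j+1) - x j))/2)) * ρ (j+1)
                 * W (j+1))
            * W j * (((x j - x (j-1)) + (x (j+1) - x j))/2)
          + ρ J * (θ * W (J-1) + (1/2 - θ) * W J) * W J * (x J - x (J-1)))
      ≤ Real.sqrt ((1 + 4*max (-θ) 0) * ρhi) *
          Real.sqrt (∑ j ∈ Finset.Ico 1 J,
              (W j)^2 * ((x j - x (j-1)) + (x (j+1) - x j))/2
            + (W J)^2 * (x J - x (J-1))/2) := by
  have hpos : ∀ j, 1 ≤ j → j ≤ J → x (j-1) < x j := by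
    intro j h1 h2
    have := hxmono (j-1) (by omega)
    rwa [Nat.sub_add_cancel h1] at this
  have hA := normId x W hW0 J hJ
  have hB := SId x ρ W θ hW0 J hJ hpos
  have hc : (0:ℝ) ≤ 1 - 4*max θ 0 := by
    rcases le_total θ 0 with h | h
    · rw [max_eq_right h]; norm_num
    · rw [max_eq_left h]; linarith
  have hC : (0:ℝ) ≤ 1 + 4*max (-θ) 0 := by positivity
  have hρhi : (0:ℝ) ≤ ρhi := le_trans hρlo.le (le_trans (hρ 1 le_rfl hJ).1 (hρ 1 le_rfl hJ).2)
  -- pointwise bounds, summed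
  have hlow : (1 - 4*max θ 0) * ρlo *
      (∑ j ∈ Finset.Ico 1 (J+1), (x j - x (j-1)) * (((W (j-1))^2 + (W j)^2)/2))
      ≤ ∑ j ∈ Finset.Ico 1 (J+1), (x j - x (j-1)) * ρ j *
          (2*θ*W (j-1)*W j + (1-2*θ)*(((W (j-1))^2 + (W j)^2)/2)) := by
    rw [Finset.mul_sum]
    apply Finset.sum_le_sum
    intro j hj
    rw [Finset.mem_Ico] at hj
    have hj1 : 1 ≤ j := hj.1
    have hjJ : j ≤ J := by omega
    have hh : 0 < x j - x (j-1) := sub_pos.2 (hpos j hj1 hjJ)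
    have hρj := hρ j hj1 hjJ
    have hq := qbounds θ (W (j-1)) (W j)
    have hm : (0:ℝ) ≤ ((W (j-1))^2 + (W j)^2)/2 := by positivity
    have h0q : 0 ≤ 2*θ*W (j-1)*W j + (1-2*θ)*(((W (j-1))^2 + (W j)^2)/2) :=
      le_trans (mul_nonneg hc hm) hq.1
    calc (1 - 4*max θ 0) * ρlo * ((x j - x (j-1)) * (((W (j-1))^2 + (W j)^2)/2))
        = (x j - x (j-1)) * (ρlo * ((1 - 4*max θ 0) * (((W (j-1))^2 + (W j)^2)/2))) := by
          ring
      _ ≤ (x j - x (j-1)) * (ρ j * (2*θ*W (j-1)*W j + (1-2*θ)*(((W (j-1))^2 + (W j)^2)/2))) := by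
          apply mul_le_mul_of_nonneg_left _ hh.le
          exact mul_le_mul hρj.1 hq.1 (mul_nonneg hc hm) (le_trans hρlo.le hρj.1)
      _ = (x j - x (j-1)) * ρ j * (2*θ*W (j-1)*W j + (1-2*θ)*(((W (j-1))^2 + (W j)^2)/2)) := by
          ring
  have hhigh : (∑ j ∈ Finset.Ico 1 (J+1), (x j - x (j-1)) * ρ j *
          (2*θ*W (j-1)*W j + (1-2*θ)*(((W (j-1))^2 + (W j)^2)/2)))
      ≤ (1 + 4*max (-θ) 0) * ρhi *
        (∑ j ∈ Finset.Ico 1 (J+1), (x j - x (j-1)) * (((W (j-1))^2 + (W j)^2)/2)) := by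
    rw [Finset.mul_sum]
    apply Finset.sum_le_sum
    intro j hj
    rw [Finset.mem_Ico] at hj
    have hj1 : 1 ≤ j := hj.1
    have hjJ : j ≤ J := by omega
    have hh : 0 < x j - x (j-1) := sub_pos.2 (hpos j hj1 hjJ)
    have hρj := hρ j hj1 hjJ
    have hq := qbounds θ (W (j-1)) (W j)
    have hm : (0:ℝ) ≤ ((W (j-1))^2 + (W j)^2)/2 := by positivity
    have h0q : 0 ≤ 2*θ*W (j-1)*W j + (1-2*θ)*(((W (j-1))^2 + (W j)^2)/2) :=
      le_trans (mul_nonneg hc hm) hq.1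
    calc (x j - x (j-1)) * ρ j * (2*θ*W (j-1)*W j + (1-2*θ)*(((W (j-1))^2 + (W j)^2)/2))
        = (x j - x (j-1)) * (ρ j * (2*θ*W (j-1)*W j + (1-2*θ)*(((W (j-1))^2 + (W j)^2)/2))) := by
          ring
      _ ≤ (x j - x (j-1)) * (ρhi * ((1 + 4*max (-θ) 0) * (((W (j-1))^2 + (W j)^2)/2))) := by
          apply mul_le_mul_of_nonneg_left _ hh.le
          exact mul_le_mul hρj.2 hq.2 h0q hρhi
      _ = (1 + 4*max (-θ) 0) * ρhi * ((x j - x (j-1)) * (((W (j-1))^2 + (W j)^2)/2)) := by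
          ring
  have hNnn : 0 ≤ ∑ j ∈ Finset.Ico 1 (J+1), (x j - x (j-1)) * (((W (j-1))^2 + (W j)^2)/2) := by
    apply Finset.sum_nonneg
    intro j hj
    rw [Finset.mem_Ico] at hj
    have hh : 0 < x j - x (j-1) := sub_pos.2 (hpos j hj.1 (by omega))
    positivity
  rw [hA, hB]
  constructor
  · rw [← Real.sqrt_mul (mul_nonneg hc hρlo.le)]
    exact Real.sqrt_le_sqrt hlow
  · rw [← Real.sqrt_mul (mul_nonneg hC hρhi)]
    exact Real.sqrt_le_sqrt hhigh
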